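/- Let M be a loopless matroid on a finite ground set E with |E| = n and rank function r. Let ∅ = F_0 ⊊ F_1 ⊊ ⋯ ⊊ F_k = E be a chain of subsets, set E_i = F_i \ F_{i−1} and r_i = r(F_i) − r(F_{i−1}), and assume r_i ≥ 1 for all i and that the densities λ_i = |E_i| / r_i satisfy λ_1 > λ_2 > ⋯ > λ_k ≥ 1 (as holds for the principal sequence of M). Then for every 1 ≤ j ≤ n, the average over all j-element subsets A of E of Σ_{i=1}^k min(|A ∩ E_i|, r_i) is at least (1 − 1/e) times the average over all j-element subsets A of E of r(A); that is, Σ_{|A| = j} Σ_{i=1}^k min(|A ∩ E_i|, r_i) ≥ (1 − 1/e) · Σ_{|A| = j} r(A). -/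

import Mathlib

/-- A matroid on a finite ground set `E`, given by its rank function `r`,
where `r X` is the size of a largest independent subset of `X`. -/
structure FinMatroid (α : Type*) [DecidableEq α] where
  E : Finset α
  r : Finset α → ℕ
  r_empty : r ∅ = 0
  r_le_card : ∀ X : Finset α, r X ≤ X.card
  r_mono : ∀ ⦃X Y : Finset α⦄, X ⊆ Y → r X ≤ r Y
  r_submod : ∀ X Y : Finset α, r (X ∪ Y) + r (X ∩ Y) ≤ r X + r Y

/-- A matroid is loopless if every singleton of the ground set is independent. -/
def FinMatroid.Loopless {α : Type*} [DecidableEq α] (M : FinMatroid α) : Prop :=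
  ∀ e ∈ M.E, M.r {e} = 1

set_option linter.unusedSectionVars false

namespace Stmt8Aux


variable {α : Type*} [DecidableEq α]

/-- elementary symmetric sum -/
noncomputable def esum (E : Finset α) (w : α → ℝ) (j : ℕ) : ℝ :=
  ∑ U ∈ E.powersetCard j, ∏ e ∈ U, w e

lemma lemA (E : Finset α) (w : α → ℝ) (j : ℕ) :
    ((j : ℝ) + 1) * esum E w (j + 1) =
      ∑ T ∈ E.powersetCard j, ∑ a ∈ E \ T, w a * ∏ e ∈ T, w e := by
  have h1 : ((j : ℝ) + 1) * esum E w (j + 1)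
      = ∑ U ∈ E.powersetCard (j + 1), ∑ a ∈ U, w a * ∏ e ∈ U.erase a, w e := by
    rw [esum, Finset.mul_sum]
    refine Finset.sum_congr rfl fun U hU => ?_
    rw [Finset.mem_powersetCard] at hU
    rw [Finset.sum_congr rfl fun a ha => Finset.mul_prod_erase U w ha,
      Finset.sum_const, hU.2]
    push_cast
    ring
  rw [h1, Finset.sum_sigma' (E.powersetCard (j+1)) (fun U => U)
      (fun U a => w a * ∏ e ∈ U.erase a, w e),
    Finset.sum_sigma' (E.powersetCard j) (fun T => E \ T)
      (fun T a => w a * ∏ e ∈ T, w e)]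
  refine Finset.sum_nbij' (fun x => ⟨x.1.erase x.2, x.2⟩)
    (fun x => ⟨insert x.2 x.1, x.2⟩) ?_ ?_ ?_ ?_ ?_
  · rintro ⟨U, a⟩ hx
    rw [Finset.mem_sigma, Finset.mem_powersetCard] at hx
    obtain ⟨⟨hUE, hcard⟩, ha⟩ := hx
    simp only [Finset.mem_sigma, Finset.mem_powersetCard, Finset.mem_sdiff]
    exact ⟨⟨(Finset.erase_subset _ _).trans hUE, by
        rw [Finset.card_erase_of_mem ha, hcard]; rfl⟩,
      hUE ha, Finset.notMem_erase _ _⟩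
  · rintro ⟨T, a⟩ hx
    rw [Finset.mem_sigma, Finset.mem_powersetCard] at hx
    obtain ⟨⟨hTE, hcard⟩, ha⟩ := hx
    rw [Finset.mem_sdiff] at ha
    simp only [Finset.mem_sigma, Finset.mem_powersetCard]
    exact ⟨⟨Finset.insert_subset ha.1 hTE,
      by rw [Finset.card_insert_of_notMem ha.2, hcard]⟩, Finset.mem_insert_self _ _⟩
  · rintro ⟨U, a⟩ hx
    rw [Finset.mem_sigma] at hx
    simp [Finset.insert_erase hx.2]
  · rintro ⟨T, a⟩ hx
    rw [Finset.mem_sigma, Finset.mem_sdiff] at hx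
    simp [Finset.erase_insert hx.2.2]
  · rintro ⟨U, a⟩ hx
    rfl

lemma lemB (E : Finset α) (w : α → ℝ) (j : ℕ) :
    (∑ e ∈ E, w e) * esum E w j =
      (∑ T ∈ E.powersetCard j, ∑ a ∈ E \ T, w a * ∏ e ∈ T, w e) +
      ∑ T ∈ E.powersetCard j, ∑ a ∈ T, w a * ∏ e ∈ T, w e := by
  rw [esum, Finset.mul_sum, ← Finset.sum_add_distrib]
  refine Finset.sum_congr rfl fun T hT => ?_
  rw [Finset.mem_powersetCard] at hT
  rw [← Finset.sum_mul, ← Finset.sum_mul, ← _root_.add_mul,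
    Finset.sum_sdiff hT.1, mul_comm]




lemma lemC (E : Finset α) (w : α → ℝ) (hw : ∀ e ∈ E, 0 ≤ w e) (j : ℕ)
    (hjn : j + 1 ≤ E.card) :
    ((j : ℝ) + 1) * ∑ T ∈ E.powersetCard (j + 1), ∑ a ∈ E \ T, w a * ∏ e ∈ T, w e ≤
      ((E.card : ℝ) - (j + 1)) *
        ∑ T ∈ E.powersetCard (j + 1), ∑ b ∈ T, w b * ∏ e ∈ T, w e := by
  classical
  set K := (E.powersetCard j).sigma
      (fun V => ((E \ V).sigma (fun b => (E \ V).erase b))) with hK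
  have memK : ∀ {V : Finset α} {b a : α}, V ⊆ E → V.card = j → b ∈ E → b ∉ V →
      a ∈ E → a ∉ V → a ≠ b →
      (⟨V, b, a⟩ : (_ : Finset α) × (_ : α) × α) ∈ K := by
    intro V b a h1 h2 h3 h4 h5 h6 h7
    exact Finset.mem_sigma.2 ⟨Finset.mem_powersetCard.2 ⟨h1, h2⟩,
      Finset.mem_sigma.2 ⟨Finset.mem_sdiff.2 ⟨h3, h4⟩,
        Finset.mem_erase.2 ⟨h7, Finset.mem_sdiff.2 ⟨h5, h6⟩⟩⟩⟩
  have hKmem : ∀ x ∈ K, x.1 ⊆ E ∧ x.1.card = j ∧ x.2.1 ∈ E ∧ x.2.1 ∉ x.1 ∧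
      x.2.2 ∈ E ∧ x.2.2 ∉ x.1 ∧ x.2.2 ≠ x.2.1 := by
    rintro ⟨V, b, a⟩ hx
    simp only [hK, Finset.mem_sigma, Finset.mem_powersetCard, Finset.mem_erase,
      Finset.mem_sdiff] at hx
    exact ⟨hx.1.1, hx.1.2, hx.2.1.1, hx.2.1.2, hx.2.2.2.1, hx.2.2.2.2, hx.2.2.1⟩
  -- Claim 1
  have claim1 : ((j : ℝ) + 1) *
        ∑ T ∈ E.powersetCard (j + 1), ∑ a ∈ E \ T, w a * ∏ e ∈ T, w e
      = ∑ x ∈ K, w x.2.2 * (w x.2.1 * ∏ e ∈ x.1, w e) := by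
    have h1 : ((j : ℝ) + 1) *
          ∑ T ∈ E.powersetCard (j + 1), ∑ a ∈ E \ T, w a * ∏ e ∈ T, w e
        = ∑ T ∈ E.powersetCard (j + 1), ∑ a ∈ E \ T, ∑ b ∈ T,
            w a * (w b * ∏ e ∈ T.erase b, w e) := by
      rw [Finset.mul_sum]
      refine Finset.sum_congr rfl fun T hT => ?_
      rw [Finset.mem_powersetCard] at hT
      rw [Finset.mul_sum]
      refine Finset.sum_congr rfl fun a _ => ?_
      have hb : (∑ b ∈ T, w b * ∏ e ∈ T.erase b, w e)
          = ((j : ℝ) + 1) * ∏ e ∈ T, w e := by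
        rw [Finset.sum_congr rfl fun b hb => Finset.mul_prod_erase T w hb,
          Finset.sum_const, hT.2, nsmul_eq_mul]
        push_cast
        ring
      rw [← Finset.mul_sum, hb]
      ring
    have h2 : ∀ T : Finset α,
        (∑ a ∈ E \ T, ∑ b ∈ T, w a * (w b * ∏ e ∈ T.erase b, w e))
        = ∑ p ∈ (E \ T).sigma (fun _ => T), w p.1 * (w p.2 * ∏ e ∈ T.erase p.2, w e) :=
      fun T => Finset.sum_sigma' (E \ T) (fun _ => T)
        (fun a b => w a * (w b * ∏ e ∈ T.erase b, w e))
    rw [h1, Finset.sum_congr rfl fun T _ => h2 T,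
      Finset.sum_sigma' (E.powersetCard (j + 1)) (fun T => (E \ T).sigma (fun _ => T))
        (fun T p => w p.1 * (w p.2 * ∏ e ∈ T.erase p.2, w e))]
    refine Finset.sum_nbij' (fun x => ⟨x.1.erase x.2.2, x.2.2, x.2.1⟩)
      (fun x => ⟨insert x.2.1 x.1, x.2.2, x.2.1⟩) ?_ ?_ ?_ ?_ ?_
    · rintro ⟨T, a, b⟩ hx
      simp only [Finset.mem_sigma, Finset.mem_powersetCard, Finset.mem_sdiff] at hx
      obtain ⟨⟨hTE, hcard⟩, ⟨haE, haT⟩, hbT⟩ := hx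
      refine memK ((Finset.erase_subset _ _).trans hTE) ?_ (hTE hbT)
        (Finset.notMem_erase _ _) haE (fun hc => haT (Finset.erase_subset _ _ hc)) ?_
      · rw [Finset.card_erase_of_mem hbT, hcard]
        rfl
      · exact fun h => haT ((show a = b from h) ▸ hbT)
    · rintro ⟨V, b, a⟩ hx
      obtain ⟨hVE, hcard, hbE, hbV, haE, haV, hab⟩ := hKmem ⟨V, b, a⟩ hx
      refine Finset.mem_sigma.2 ⟨Finset.mem_powersetCard.2
        ⟨Finset.insert_subset hbE hVE, by rw [Finset.card_insert_of_notMem hbV, hcard]⟩,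
        Finset.mem_sigma.2 ⟨Finset.mem_sdiff.2 ⟨haE, ?_⟩, Finset.mem_insert_self _ _⟩⟩
      simp only [Finset.mem_insert, not_or]
      exact ⟨hab, haV⟩
    · rintro ⟨T, a, b⟩ hx
      simp only [Finset.mem_sigma, Finset.mem_sdiff] at hx
      obtain ⟨_, _, hbT⟩ := hx
      simp [Finset.insert_erase hbT]
    · rintro ⟨V, b, a⟩ hx
      have h := hKmem ⟨V, b, a⟩ hx
      simp [Finset.erase_insert h.2.2.2.1]
    · rintro ⟨T, a, b⟩ _
      rfl
  -- Claim 2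
  have claim2 : ((E.card : ℝ) - (j + 1)) *
        ∑ T ∈ E.powersetCard (j + 1), ∑ b ∈ T, w b * ∏ e ∈ T, w e
      = ∑ x ∈ K, w x.2.1 * (w x.2.1 * ∏ e ∈ x.1, w e) := by
    have h1 : ∑ T ∈ E.powersetCard (j + 1), ∑ b ∈ T, w b * ∏ e ∈ T, w e
        = ∑ p ∈ (E.powersetCard j).sigma (fun V => E \ V),
            w p.2 * (w p.2 * ∏ e ∈ p.1, w e) := by
      have h0 : ∑ T ∈ E.powersetCard (j + 1), ∑ b ∈ T, w b * ∏ e ∈ T, w e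
          = ∑ T ∈ E.powersetCard (j + 1), ∑ b ∈ T,
              w b * (w b * ∏ e ∈ T.erase b, w e) := by
        refine Finset.sum_congr rfl fun T _ => Finset.sum_congr rfl fun b hb => ?_
        rw [Finset.mul_prod_erase T w hb]
      rw [h0, Finset.sum_sigma' (E.powersetCard (j + 1)) (fun T => T)
        (fun T b => w b * (w b * ∏ e ∈ T.erase b, w e))]
      refine Finset.sum_nbij' (fun x => ⟨x.1.erase x.2, x.2⟩)
        (fun x => ⟨insert x.2 x.1, x.2⟩) ?_ ?_ ?_ ?_ ?_
      · rintro ⟨T, b⟩ hx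
        simp only [Finset.mem_sigma, Finset.mem_powersetCard] at hx
        obtain ⟨⟨hTE, hcard⟩, hbT⟩ := hx
        refine Finset.mem_sigma.2 ⟨Finset.mem_powersetCard.2
          ⟨(Finset.erase_subset _ _).trans hTE, ?_⟩,
          Finset.mem_sdiff.2 ⟨hTE hbT, Finset.notMem_erase _ _⟩⟩
        rw [Finset.card_erase_of_mem hbT, hcard]
        rfl
      · rintro ⟨V, b⟩ hx
        simp only [Finset.mem_sigma, Finset.mem_powersetCard, Finset.mem_sdiff] at hx
        obtain ⟨⟨hVE, hcard⟩, hbE, hbV⟩ := hx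
        exact Finset.mem_sigma.2 ⟨Finset.mem_powersetCard.2
          ⟨Finset.insert_subset hbE hVE,
            by rw [Finset.card_insert_of_notMem hbV, hcard]⟩,
          Finset.mem_insert_self _ _⟩
      · rintro ⟨T, b⟩ hx
        simp only [Finset.mem_sigma] at hx
        simp [Finset.insert_erase hx.2]
      · rintro ⟨V, b⟩ hx
        simp only [Finset.mem_sigma, Finset.mem_sdiff] at hx
        simp [Finset.erase_insert hx.2.2]
      · rintro ⟨T, b⟩ _
        rfl
    have h2 : ∀ p ∈ (E.powersetCard j).sigma (fun V => E \ V),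
        (((E \ p.1).erase p.2).card : ℝ) = (E.card : ℝ) - (j + 1) := by
      rintro ⟨V, b⟩ hp
      simp only [Finset.mem_sigma, Finset.mem_powersetCard, Finset.mem_sdiff] at hp
      obtain ⟨⟨hVE, hcard⟩, hbE, hbV⟩ := hp
      have hc : ((E \ V).erase b).card = E.card - (j + 1) := by
        rw [Finset.card_erase_of_mem (Finset.mem_sdiff.2 ⟨hbE, hbV⟩),
          Finset.card_sdiff_of_subset hVE, hcard]
        omega
      rw [hc, Nat.cast_sub hjn]
      push_cast
      ring
    have hRHS : ∑ x ∈ K, w x.2.1 * (w x.2.1 * ∏ e ∈ x.1, w e)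
        = ∑ V ∈ E.powersetCard j, ∑ b ∈ E \ V,
            ((((E \ V).erase b).card : ℝ)) * (w b * (w b * ∏ e ∈ V, w e)) := by
      rw [hK, Finset.sum_sigma]
      refine Finset.sum_congr rfl fun V hV => ?_
      rw [Finset.sum_sigma]
      refine Finset.sum_congr rfl fun b hb => ?_
      show ∑ _a ∈ (E \ V).erase b, w b * (w b * ∏ e ∈ V, w e)
          = (((E \ V).erase b).card : ℝ) * (w b * (w b * ∏ e ∈ V, w e))
      rw [Finset.sum_const, nsmul_eq_mul]
    rw [h1, hRHS, Finset.sum_sigma, Finset.mul_sum]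
    refine Finset.sum_congr rfl fun V hV => ?_
    rw [Finset.mul_sum]
    refine Finset.sum_congr rfl fun b hb => ?_
    rw [h2 ⟨V, b⟩ (Finset.mem_sigma.2 ⟨hV, hb⟩)]
  -- Claim 3 : AM-GM plus swap symmetry
  have prodnn : ∀ x ∈ K, (0:ℝ) ≤ ∏ e ∈ x.1, w e := by
    intro x hx
    exact Finset.prod_nonneg fun e he => hw e ((hKmem x hx).1 he)
  have swapmem : ∀ x ∈ K, (⟨x.1, x.2.2, x.2.1⟩ : (_ : Finset α) × (_ : α) × α) ∈ K := by
    intro x hx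
    obtain ⟨h1', h2', h3', h4', h5', h6', h7'⟩ := hKmem x hx
    exact memK h1' h2' h5' h6' h3' h4' h7'.symm
  have swapEq : ∑ x ∈ K, w x.2.2 * (w x.2.2 * ∏ e ∈ x.1, w e)
      = ∑ x ∈ K, w x.2.1 * (w x.2.1 * ∏ e ∈ x.1, w e) := by
    refine Finset.sum_nbij' (fun x => ⟨x.1, x.2.2, x.2.1⟩) (fun x => ⟨x.1, x.2.2, x.2.1⟩)
      swapmem swapmem ?_ ?_ ?_
    · rintro ⟨V, b, a⟩ _; rfl
    · rintro ⟨V, b, a⟩ _; rfl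
    · rintro ⟨V, b, a⟩ _; rfl
  have claim3 : ∑ x ∈ K, w x.2.2 * (w x.2.1 * ∏ e ∈ x.1, w e)
      ≤ ∑ x ∈ K, w x.2.1 * (w x.2.1 * ∏ e ∈ x.1, w e) := by
    have hterm : ∀ x ∈ K, w x.2.2 * (w x.2.1 * ∏ e ∈ x.1, w e)
        ≤ (w x.2.2 * (w x.2.2 * ∏ e ∈ x.1, w e)
            + w x.2.1 * (w x.2.1 * ∏ e ∈ x.1, w e)) / 2 := by
      intro x hx
      obtain ⟨_, _, h3', _, h5', _, _⟩ := hKmem x hx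
      have hp := prodnn x hx
      nlinarith [sq_nonneg (w x.2.2 - w x.2.1), mul_nonneg (mul_nonneg (hw _ h5') (hw _ h3')) hp,
        sq_nonneg (w x.2.2 + w x.2.1)]
    calc ∑ x ∈ K, w x.2.2 * (w x.2.1 * ∏ e ∈ x.1, w e)
        ≤ ∑ x ∈ K, (w x.2.2 * (w x.2.2 * ∏ e ∈ x.1, w e)
            + w x.2.1 * (w x.2.1 * ∏ e ∈ x.1, w e)) / 2 := Finset.sum_le_sum hterm
      _ = ∑ x ∈ K, w x.2.1 * (w x.2.1 * ∏ e ∈ x.1, w e) := by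
          rw [← Finset.sum_div, Finset.sum_add_distrib, swapEq]
          ring
  rw [claim1, claim2]
  exact claim3






lemma esum_nonneg (E : Finset α) (w : α → ℝ) (hw : ∀ e ∈ E, 0 ≤ w e) (j : ℕ) :
    0 ≤ esum E w j := by
  refine Finset.sum_nonneg fun U hU => Finset.prod_nonneg fun e he => ?_
  rw [Finset.mem_powersetCard] at hU
  exact hw e (hU.1 he)

lemma keyStep (E : Finset α) (w : α → ℝ) (hw : ∀ e ∈ E, 0 ≤ w e) (j : ℕ)
    (hjn : j + 1 ≤ E.card) :
    (E.card : ℝ) * (((j : ℝ) + 1) * esum E w (j + 1)) ≤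
      ((E.card : ℝ) - j) * ((∑ e ∈ E, w e) * esum E w j) := by
  set Y := ∑ T ∈ E.powersetCard j, ∑ a ∈ E \ T, w a * ∏ e ∈ T, w e with hY
  set Q := ∑ T ∈ E.powersetCard j, ∑ a ∈ T, w a * ∏ e ∈ T, w e with hQ
  have hYe : ((j : ℝ) + 1) * esum E w (j + 1) = Y := lemA E w j
  have hBe : (∑ e ∈ E, w e) * esum E w j = Y + Q := lemB E w j
  have hjQ : (j : ℝ) * Y ≤ ((E.card : ℝ) - j) * Q := by
    rcases Nat.eq_zero_or_pos j with hj0 | hjpos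
    · subst hj0
      have hQ0 : Q = 0 := by
        rw [hQ, Finset.powersetCard_zero, Finset.sum_singleton]
        simp
      simp [hQ0]
    · obtain ⟨j', rfl⟩ : ∃ j', j = j' + 1 := ⟨j - 1, by omega⟩
      have hthis := lemC E w hw j' (by omega)
      rw [hY, hQ]
      push_cast at hthis ⊢
      exact hthis
  have hYnn : 0 ≤ Y := by
    rw [← hYe]
    have := esum_nonneg E w hw (j + 1)
    positivity
  rw [hYe, hBe]
  have hnj : (0:ℝ) ≤ (E.card : ℝ) - j := by
    have : (j : ℝ) + 1 ≤ (E.card : ℝ) := by exact_mod_cast hjn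
    linarith
  nlinarith [hjQ, hYnn]

lemma maclaurin (E : Finset α) (w : α → ℝ) (hw : ∀ e ∈ E, 0 ≤ w e) (j : ℕ) :
    (E.card : ℝ) ^ j * esum E w j ≤ (E.card.choose j : ℝ) * (∑ e ∈ E, w e) ^ j := by
  induction j with
  | zero => simp [esum]
  | succ j ih =>
    have hwsum : 0 ≤ ∑ e ∈ E, w e := Finset.sum_nonneg hw
    by_cases h : j + 1 ≤ E.card
    · have key := keyStep E w hw j h
      have hnj : (0:ℝ) ≤ (E.card : ℝ) - j := by
        have : (j : ℝ) + 1 ≤ (E.card : ℝ) := by exact_mod_cast h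
        linarith
      have hC : (E.card.choose (j+1) : ℝ) * ((j:ℝ)+1) =
          (E.card.choose j : ℝ) * ((E.card:ℝ) - j) := by
        have := Nat.choose_succ_right_eq E.card j
        have hcast : ((E.card - j : ℕ) : ℝ) = (E.card : ℝ) - j :=
          Nat.cast_sub (by omega)
        push_cast [← hcast]
        exact_mod_cast this
      have hnn : (0:ℝ) ≤ (E.card:ℝ)^j := by positivity
      have step1 : ((j:ℝ)+1) * ((E.card:ℝ)^(j+1) * esum E w (j+1)) ≤
          ((E.card:ℝ) - j) * (∑ e ∈ E, w e) * ((E.card:ℝ)^j * esum E w j) := by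
        have := mul_le_mul_of_nonneg_left key hnn
        calc ((j:ℝ)+1) * ((E.card:ℝ)^(j+1) * esum E w (j+1))
            = (E.card:ℝ)^j * ((E.card : ℝ) * (((j : ℝ) + 1) * esum E w (j + 1))) := by ring
          _ ≤ (E.card:ℝ)^j * (((E.card : ℝ) - j) * ((∑ e ∈ E, w e) * esum E w j)) := this
          _ = ((E.card:ℝ) - j) * (∑ e ∈ E, w e) * ((E.card:ℝ)^j * esum E w j) := by ring
      have step2 : ((E.card:ℝ) - j) * (∑ e ∈ E, w e) * ((E.card:ℝ)^j * esum E w j) ≤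
          ((E.card:ℝ) - j) * (∑ e ∈ E, w e) * ((E.card.choose j : ℝ) * (∑ e ∈ E, w e) ^ j) :=
        mul_le_mul_of_nonneg_left ih (by positivity)
      have step3 : ((E.card:ℝ) - j) * (∑ e ∈ E, w e) *
            ((E.card.choose j : ℝ) * (∑ e ∈ E, w e) ^ j)
          = ((j:ℝ)+1) * ((E.card.choose (j+1) : ℝ) * (∑ e ∈ E, w e) ^ (j+1)) := by
        linear_combination (-((∑ e ∈ E, w e) ^ (j + 1))) * hC
      have hfin := (step1.trans step2).trans_eq step3
      have hj1 : (0:ℝ) < (j:ℝ) + 1 := by positivity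
      exact le_of_mul_le_mul_left hfin hj1
    · have : esum E w (j+1) = 0 := by
        rw [esum, Finset.powersetCard_eq_empty.2 (by omega), Finset.sum_empty]
      rw [this]
      have : (0:ℝ) ≤ (E.card.choose (j+1) : ℝ) * (∑ e ∈ E, w e) ^ (j+1) := by positivity
      linarith




lemma count_mem (E : Finset α) (j : ℕ) {e : α} (he : e ∈ E) (hj : 1 ≤ j) :
    ((E.powersetCard j).filter (fun A => e ∈ A)).card
      = (E.card - 1).choose (j - 1) := by
  classical
  have : ((E.erase e).powersetCard (j-1)).card = (E.card - 1).choose (j - 1) := by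
    rw [Finset.card_powersetCard, Finset.card_erase_of_mem he]
  rw [← this]
  refine Finset.card_nbij' (fun A => A.erase e) (fun B => insert e B) ?_ ?_ ?_ ?_
  · intro A hA
    simp only [Finset.mem_coe, Finset.mem_filter, Finset.mem_powersetCard] at hA
    obtain ⟨⟨hAE, hcard⟩, heA⟩ := hA
    rw [Finset.mem_coe, Finset.mem_powersetCard]
    constructor
    · intro x hx
      rw [Finset.mem_erase] at hx ⊢
      exact ⟨hx.1, hAE hx.2⟩
    · rw [Finset.card_erase_of_mem heA, hcard]
  · intro B hB
    rw [Finset.mem_coe, Finset.mem_powersetCard] at hB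
    obtain ⟨hBE, hcard⟩ := hB
    have heB : e ∉ B := fun hc => (Finset.mem_erase.1 (hBE hc)).1 rfl
    simp only [Finset.mem_coe, Finset.mem_filter, Finset.mem_powersetCard]
    refine ⟨⟨Finset.insert_subset he (hBE.trans (Finset.erase_subset _ _)), ?_⟩,
      Finset.mem_insert_self _ _⟩
    rw [Finset.card_insert_of_notMem heB, hcard]
    omega
  · intro A hA
    simp only [Finset.mem_coe, Finset.mem_filter] at hA
    exact Finset.insert_erase hA.2
  · intro B hB
    rw [Finset.mem_coe, Finset.mem_powersetCard] at hB
    have heB : e ∉ B := fun hc => (Finset.mem_erase.1 (hB.1 hc)).1 rfl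
    exact Finset.erase_insert heB

lemma sum_inter_card (E S : Finset α) (hS : S ⊆ E) (j : ℕ) (hj : 1 ≤ j) :
    ∑ A ∈ E.powersetCard j, (A ∩ S).card
      = S.card * (E.card - 1).choose (j - 1) := by
  classical
  have h1 : ∀ A : Finset α, (A ∩ S).card = ∑ e ∈ S, if e ∈ A then 1 else 0 := by
    intro A
    rw [Finset.sum_ite_mem, Finset.sum_const, smul_eq_mul, mul_one, Finset.inter_comm]
  rw [Finset.sum_congr rfl fun A _ => h1 A, Finset.sum_comm]
  rw [Finset.sum_congr rfl (fun e he => by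
    rw [← Finset.sum_filter, Finset.sum_const, smul_eq_mul, mul_one,
      count_mem E j (hS he) hj])]
  rw [Finset.sum_const, smul_eq_mul]


-- analytic lemmas
lemma min_pow_bound (x ρ : ℕ) (hρ : 1 ≤ ρ) :
    (ρ : ℝ) * (1 - (1 - 1/(ρ:ℝ))^x) ≤ (min x ρ : ℕ) := by
  have hρpos : (0:ℝ) < ρ := by exact_mod_cast hρ
  have hc0 : (0:ℝ) ≤ 1 - 1/(ρ:ℝ) := by
    rw [sub_nonneg, div_le_one hρpos]
    exact_mod_cast hρ
  have hBern : 1 - (x:ℝ)/(ρ:ℝ) ≤ (1 - 1/(ρ:ℝ))^x := by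
    have := one_add_mul_le_pow (a := -(1/(ρ:ℝ))) (by
      have : 1/(ρ:ℝ) ≤ 1 := by rw [div_le_one hρpos]; exact_mod_cast hρ
      linarith) x
    calc 1 - (x:ℝ)/(ρ:ℝ) = 1 + x * (-(1/(ρ:ℝ))) := by ring
      _ ≤ (1 + -(1/(ρ:ℝ)))^x := this
      _ = (1 - 1/(ρ:ℝ))^x := by ring_nf
  have h1 : (ρ : ℝ) * (1 - (1 - 1/(ρ:ℝ))^x) ≤ x := by
    have := mul_le_mul_of_nonneg_left hBern (le_of_lt hρpos)
    have h2 : (ρ:ℝ) * (1 - (x:ℝ)/(ρ:ℝ)) = ρ - x := by field_simp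
    nlinarith
  have h2 : (ρ : ℝ) * (1 - (1 - 1/(ρ:ℝ))^x) ≤ ρ := by
    have : (0:ℝ) ≤ (1 - 1/(ρ:ℝ))^x := pow_nonneg hc0 x
    nlinarith
  rcases le_total x ρ with h | h
  · rw [min_eq_left h]; exact h1
  · rw [min_eq_right h]; exact h2

lemma exp_min_bound (u : ℝ) (hu : 0 ≤ u) :
    (1 - Real.exp (-1)) * min u 1 ≤ 1 - Real.exp (-u) := by
  rcases le_total u 1 with h | h
  · rw [min_eq_left h]
    have hconv := convexOn_exp.2 (Set.mem_univ (0:ℝ)) (Set.mem_univ (-1:ℝ))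
      (by linarith : (0:ℝ) ≤ 1 - u) hu (by ring)
    simp only [smul_eq_mul] at hconv
    have : Real.exp ((1-u) * 0 + u * (-1)) ≤ (1-u) * Real.exp 0 + u * Real.exp (-1) := hconv
    rw [Real.exp_zero] at this
    have heq : (1-u) * 0 + u * (-1) = -u := by ring
    rw [heq] at this
    nlinarith
  · rw [min_eq_right h]
    have : Real.exp (-u) ≤ Real.exp (-1) := Real.exp_le_exp.2 (by linarith)
    linarith

lemma downward_closed_eq_range (S : Finset ℕ) (h : ∀ a b : ℕ, a ≤ b → b ∈ S → a ∈ S) :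
    S = Finset.range S.card := by
  have hsub : S ⊆ Finset.range S.card := by
    intro x hx
    rw [Finset.mem_range]
    by_contra hc
    push_neg at hc
    have hsub2 : Finset.range (x+1) ⊆ S := fun y hy =>
      h y x (by rw [Finset.mem_range] at hy; omega) hx
    have := Finset.card_le_card hsub2
    rw [Finset.card_range] at this
    omega
  exact Finset.eq_of_subset_of_card_le hsub (by rw [Finset.card_range])

end Stmt8Aux

set_option maxHeartbeats 1600000

/-- Let `∅ = F_0 ⊊ ⋯ ⊊ F_k = E` be a chain in a loopless matroid with
`E_i = F_i \ F_{i−1}`, `r_i = r(F_i) − r(F_{i−1}) ≥ 1` and strictly decreasing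
densities `λ_i = |E_i|/r_i` with `λ_k ≥ 1`. Then for every `1 ≤ j ≤ n`, the sum
over all `j`-element subsets `A ⊆ E` of the partition-matroid rank
`Σ_i min(|A ∩ E_i|, r_i)` is at least `(1 − 1/e)` times the sum over the same
subsets of `r(A)`. -/
theorem stmt8 {α : Type*} [DecidableEq α] (M : FinMatroid α) (hloop : M.Loopless)
    (n : ℕ) (hn : M.E.card = n)
    (k : ℕ) (hk : 1 ≤ k) (F : ℕ → Finset α)
    (hF0 : F 0 = ∅) (hFk : F k = M.E)
    (hchain : ∀ i < k, F i ⊂ F (i + 1))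
    (hri : ∀ i < k, M.r (F i) < M.r (F (i + 1)))
    (lam : ℕ → ℝ)
    (hlam : ∀ i < k, lam (i + 1) =
      ((F (i + 1) \ F i).card : ℝ) / ((M.r (F (i + 1)) : ℝ) - (M.r (F i) : ℝ)))
    (hdec : ∀ i, 1 ≤ i → i < k → lam (i + 1) < lam i)
    (hlast : 1 ≤ lam k)
    (j : ℕ) (hj1 : 1 ≤ j) (hjn : j ≤ n) :
    (1 - (Real.exp 1)⁻¹) * ∑ A ∈ M.E.powersetCard j, (M.r A : ℝ) ≤
      ∑ A ∈ M.E.powersetCard j, ∑ i ∈ Finset.range k,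
        (min (A ∩ (F (i + 1) \ F i)).card (M.r (F (i + 1)) - M.r (F i)) : ℝ) := by
  classical
  have hn1 : 1 ≤ n := le_trans hj1 hjn
  have hnR : (0:ℝ) < n := by exact_mod_cast hn1
  set ρ : ℕ → ℕ := fun i => M.r (F (i+1)) - M.r (F i) with hρdef
  set m : ℕ → ℕ := fun i => ((F (i+1)) \ (F i)).card with hmdef
  have hFsub : ∀ i, i < k → F i ⊆ F (i+1) := fun i hi => (hchain i hi).subset
  have hFmono : ∀ b, b ≤ k → ∀ a, a ≤ b → F a ⊆ F b := by
    intro b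
    induction b with
    | zero => intro _ a ha; have : a = 0 := by omega
              subst this; exact subset_rfl
    | succ b ih =>
      intro hbk a ha
      rcases Nat.lt_or_ge a (b+1) with h | h
      · exact (ih (by omega) a (by omega)).trans (hFsub b (by omega))
      · have : a = b + 1 := by omega
        subst this; exact subset_rfl
  have hFE : ∀ i, i ≤ k → F i ⊆ M.E := fun i hik => hFk ▸ hFmono k le_rfl i hik
  have hρ1 : ∀ i, i < k → 1 ≤ ρ i := by
    intro i hi
    have := hri i hi
    simp only [hρdef]
    omega
  have hρcast : ∀ i, i < k → (ρ i : ℝ) = (M.r (F (i+1)) : ℝ) - M.r (F i) := by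
    intro i hi
    simp only [hρdef]
    exact_mod_cast Nat.cast_sub (hri i hi).le
  have hρpos : ∀ i, i < k → (0:ℝ) < ρ i := by
    intro i hi
    exact_mod_cast hρ1 i hi
  have hmcast : ∀ i, i < k → (m i : ℝ) = ((F (i+1)).card : ℝ) - (F i).card := by
    intro i hi
    simp only [hmdef]
    rw [Finset.card_sdiff_of_subset (hFsub i hi)]
    exact_mod_cast Nat.cast_sub (Finset.card_le_card (hFsub i hi))
  -- condition in terms of lambda
  have hcond : ∀ i, i < k → ((n * ρ i ≤ j * m i) ↔ (n : ℝ) ≤ j * lam (i+1)) := by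
    intro i hi
    rw [hlam i hi, ← hρcast i hi]
    have : ((F (i + 1) \ F i).card : ℝ) = (m i : ℝ) := by simp [hmdef]
    rw [this, mul_div_assoc', le_div_iff₀ (hρpos i hi)]
    constructor <;> intro h <;> exact_mod_cast h
  have hlam_mono : ∀ b, b ≤ k → ∀ a, 1 ≤ a → a ≤ b → lam b ≤ lam a := by
    intro b
    induction b with
    | zero => intro _ a h1 h2; omega
    | succ b ih =>
      intro hbk a h1 h2
      rcases Nat.lt_or_ge a (b+1) with h | h
      · have h3 : lam (b+1) < lam b := hdec b (by omega) (by omega)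
        exact le_trans h3.le (ih (by omega) a h1 (by omega))
      · have : a = b + 1 := by omega
        subst this; exact le_rfl
  set P : Finset ℕ := (Finset.range k).filter (fun i => n * ρ i ≤ j * m i) with hPdef
  have hdc : ∀ a b : ℕ, a ≤ b → b ∈ P → a ∈ P := by
    intro a b hab hb
    simp only [hPdef, Finset.mem_filter, Finset.mem_range] at hb ⊢
    obtain ⟨hbk, hcb⟩ := hb
    have hak : a < k := lt_of_le_of_lt hab hbk
    refine ⟨hak, (hcond a hak).2 ?_⟩
    have h1 : (n:ℝ) ≤ j * lam (b+1) := (hcond b hbk).1 hcb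
    have h2 : lam (b+1) ≤ lam (a+1) := hlam_mono (b+1) (by omega) (a+1) (by omega) (by omega)
    have h3 : (j:ℝ) * lam (b+1) ≤ (j:ℝ) * lam (a+1) :=
      mul_le_mul_of_nonneg_left h2 (by positivity)
    linarith
  set t : ℕ := P.card with htdef
  have hPt : P = Finset.range t := Stmt8Aux.downward_closed_eq_range P hdc
  have htk : t ≤ k := by
    have h := Finset.card_filter_le (Finset.range k) (fun i => n * ρ i ≤ j * m i)
    rw [Finset.card_range] at h
    exact h
  have hmemP : ∀ i, i < t → i < k ∧ n * ρ i ≤ j * m i := by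
    intro i hit
    have : i ∈ P := by rw [hPt, Finset.mem_range]; exact hit
    simp only [hPdef, Finset.mem_filter, Finset.mem_range] at this
    exact this
  have hnotP : ∀ i, t ≤ i → i < k → j * m i < n * ρ i := by
    intro i hti hik
    have : i ∉ P := by rw [hPt, Finset.mem_range]; omega
    simp only [hPdef, Finset.mem_filter, Finset.mem_range] at this
    push_neg at this
    exact this hik
  -- telescoping sums
  have hsum_ρ : ∀ s, s ≤ k → ∑ i ∈ Finset.range s, (ρ i : ℝ) = (M.r (F s) : ℝ) := by
    intro s hs
    rw [Finset.sum_congr rfl (fun i hi => hρcast i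
      (by rw [Finset.mem_range] at hi; omega))]
    rw [Finset.sum_range_sub (fun i => (M.r (F i):ℝ))]
    rw [hF0, M.r_empty]
    simp
  have hsum_m : ∀ s, s ≤ k → ∑ i ∈ Finset.range s, (m i : ℝ) = ((F s).card : ℝ) := by
    intro s hs
    rw [Finset.sum_congr rfl (fun i hi => hmcast i
      (by rw [Finset.mem_range] at hi; omega))]
    rw [Finset.sum_range_sub (fun i => ((F i).card : ℝ))]
    rw [hF0]
    simp
  -- part (b)
  have hb' : ∑ i ∈ Finset.range k, min ((j:ℝ)/n * m i) (ρ i : ℝ)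
      = (M.r (F t) : ℝ) + (j:ℝ)/n * ((n:ℝ) - (F t).card) := by
    rw [Finset.range_eq_Ico, ← Finset.sum_Ico_consecutive _ (Nat.zero_le t) htk]
    have e1 : ∑ i ∈ Finset.Ico 0 t, min ((j:ℝ)/n * m i) (ρ i : ℝ)
        = ∑ i ∈ Finset.range t, (ρ i : ℝ) := by
      rw [← Finset.range_eq_Ico]
      refine Finset.sum_congr rfl fun i hi => ?_
      rw [Finset.mem_range] at hi
      obtain ⟨hik, hcnd⟩ := hmemP i hi
      refine min_eq_right ?_
      rw [div_mul_eq_mul_div, le_div_iff₀ hnR]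
      calc (ρ i : ℝ) * n = (n:ℝ) * ρ i := by ring
        _ ≤ (j:ℝ) * m i := by exact_mod_cast hcnd
    have e2 : ∑ i ∈ Finset.Ico t k, min ((j:ℝ)/n * m i) (ρ i : ℝ)
        = ∑ i ∈ Finset.Ico t k, (j:ℝ)/n * m i := by
      refine Finset.sum_congr rfl fun i hi => ?_
      rw [Finset.mem_Ico] at hi
      refine min_eq_left ?_
      have hlt := hnotP i hi.1 hi.2
      rw [div_mul_eq_mul_div, div_le_iff₀ hnR]
      calc (j:ℝ) * m i ≤ (n:ℝ) * ρ i := by exact_mod_cast hlt.le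
        _ = (ρ i : ℝ) * n := by ring
    rw [e1, e2, hsum_ρ t htk]
    have e3 : ∑ i ∈ Finset.Ico t k, (j:ℝ)/n * m i
        = (j:ℝ)/n * (((F k).card : ℝ) - ((F t).card : ℝ)) := by
      rw [← Finset.mul_sum, Finset.sum_Ico_eq_sub _ htk, hsum_m k le_rfl, hsum_m t htk]
    rw [e3, hFk, hn]
  -- pointwise rank bound
  have hrank : ∀ X Y : Finset α, M.r X ≤ M.r Y + (X \ Y).card := by
    intro X Y
    have h1 : M.r X ≤ M.r (Y ∪ (X \ Y)) := M.r_mono (fun x hx => by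
      rw [Finset.mem_union, Finset.mem_sdiff]
      by_cases h : x ∈ Y
      · exact Or.inl h
      · exact Or.inr ⟨hx, h⟩)
    have h2 := M.r_submod Y (X \ Y)
    have h3 := M.r_le_card (X \ Y)
    omega
  -- choose identity
  have hcc : ((n-1).choose (j-1) : ℝ) * n = (n.choose j : ℝ) * j := by
    have h := Nat.add_one_mul_choose_eq (n-1) (j-1)
    have h1 : n - 1 + 1 = n := by omega
    have h2 : j - 1 + 1 = j := by omega
    rw [h1, h2] at h
    exact_mod_cast by rw [mul_comm]; exact_mod_cast congrArg (Nat.cast (R := ℝ)) h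
  -- part (a)
  have ha : ∑ A ∈ M.E.powersetCard j, (M.r A : ℝ)
      ≤ (n.choose j : ℝ) * ((M.r (F t) : ℝ) + (j:ℝ)/n * ((n:ℝ) - (F t).card)) := by
    have hstep : ∑ A ∈ M.E.powersetCard j, (M.r A : ℝ)
        ≤ ∑ A ∈ M.E.powersetCard j, ((M.r (F t) : ℝ) + ((A \ F t).card : ℝ)) := by
      refine Finset.sum_le_sum fun A hA => ?_
      have := hrank A (F t)
      push_cast
      exact_mod_cast this
    refine hstep.trans ?_
    rw [Finset.sum_add_distrib, Finset.sum_const, Finset.card_powersetCard, hn,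
      nsmul_eq_mul]
    have hsd : ∑ A ∈ M.E.powersetCard j, ((A \ F t).card : ℝ)
        = (n.choose j : ℝ) * j - ((F t).card : ℝ) * ((n-1).choose (j-1) : ℝ) := by
      have hpt : ∀ A ∈ M.E.powersetCard j, ((A \ F t).card : ℝ)
          = (j : ℝ) - ((A ∩ F t).card : ℝ) := by
        intro A hA
        rw [Finset.mem_powersetCard] at hA
        have := Finset.card_inter_add_card_sdiff A (F t)
        rw [hA.2] at this
        have : (A ∩ F t).card + (A \ F t).card = j := this
        push_cast [← this]
        ring
      rw [Finset.sum_congr rfl hpt, Finset.sum_sub_distrib, Finset.sum_const,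
        Finset.card_powersetCard, hn, nsmul_eq_mul]
      have hsic := Stmt8Aux.sum_inter_card M.E (F t) (hFE t htk) j hj1
      rw [hn] at hsic
      have : ∑ A ∈ M.E.powersetCard j, ((A ∩ F t).card : ℝ)
          = ((F t).card : ℝ) * ((n-1).choose (j-1) : ℝ) := by exact_mod_cast hsic
      rw [this]
    rw [hsd]
    have : ((F t).card : ℝ) * ((n-1).choose (j-1) : ℝ)
        = ((F t).card : ℝ) * ((n.choose j : ℝ) * j / n) := by
      rw [← hcc]
      rw [mul_div_assoc, div_self (ne_of_gt hnR), mul_one]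
    rw [this]
    have hne : (n:ℝ) ≠ 0 := ne_of_gt hnR
    refine le_of_eq ?_
    field_simp
  -- part (c)
  have hexp1 : (0:ℝ) < 1 - Real.exp (-1) := by
    have : Real.exp (-1) < 1 := Real.exp_lt_one_iff.2 (by norm_num)
    linarith
  have hc : ∀ i ∈ Finset.range k,
      (n.choose j : ℝ) * ((1 - Real.exp (-1)) * min ((j:ℝ)/n * m i) (ρ i : ℝ))
        ≤ ∑ A ∈ M.E.powersetCard j, ((min ((A ∩ (F (i+1) \ F i)).card) (ρ i) : ℕ) : ℝ) := by
    intro i hik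
    rw [Finset.mem_range] at hik
    set S : Finset α := F (i+1) \ F i with hSdef
    have hSE : S ⊆ M.E := fun x hx => (hFE (i+1) (by omega)) ((Finset.sdiff_subset) hx)
    have hmS : S.card = m i := rfl
    set c : ℝ := 1 - 1/(ρ i : ℝ) with hcdef
    have hc0 : 0 ≤ c := by
      rw [hcdef, sub_nonneg, div_le_one (hρpos i hik)]
      exact_mod_cast hρ1 i hik
    set w : α → ℝ := fun e => if e ∈ S then c else 1 with hwdef
    have hw : ∀ e ∈ M.E, 0 ≤ w e := by
      intro e _
      rw [hwdef]
      dsimp only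
      split
      · exact hc0
      · norm_num
    -- sum of w
    have hsumw : ∑ e ∈ M.E, w e = (n:ℝ) - (m i : ℝ)/(ρ i : ℝ) := by
      rw [← Finset.sum_sdiff hSE]
      have h1 : ∑ e ∈ S, w e = c * m i := by
        have hh : ∑ e ∈ S, w e = ∑ _e ∈ S, c :=
          Finset.sum_congr rfl (fun e he => by simp [hwdef, he])
        rw [hh, Finset.sum_const, nsmul_eq_mul, hmS, mul_comm]
      have h2 : ∑ e ∈ M.E \ S, w e = (n:ℝ) - m i := by
        have hh : ∑ e ∈ M.E \ S, w e = ∑ _e ∈ M.E \ S, (1:ℝ) :=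
          Finset.sum_congr rfl (fun e he => by
            simp [hwdef, (Finset.mem_sdiff.1 he).2])
        rw [hh, Finset.sum_const, nsmul_eq_mul,
          mul_one, Finset.card_sdiff_of_subset hSE, hmS, hn]
        exact_mod_cast Nat.cast_sub (by
          have := Finset.card_le_card hSE
          rw [hmS, hn] at this
          exact this)
      rw [h1, h2, hcdef]
      have hρne : (ρ i : ℝ) ≠ 0 := ne_of_gt (hρpos i hik)
      field_simp
      ring
    have hsumw_nn : 0 ≤ ∑ e ∈ M.E, w e := Finset.sum_nonneg hw
    -- esum bound
    have hmac := Stmt8Aux.maclaurin M.E w hw j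
    rw [hn] at hmac
    have hesum_nn := Stmt8Aux.esum_nonneg M.E w hw j
    have hesum_le : Stmt8Aux.esum M.E w j ≤ (n.choose j : ℝ) * ((∑ e ∈ M.E, w e)/n)^j := by
      have hnj : (0:ℝ) < (n:ℝ)^j := by positivity
      rw [div_pow, ← mul_div_assoc, le_div_iff₀ hnj]
      calc Stmt8Aux.esum M.E w j * (n:ℝ)^j = (n:ℝ)^j * Stmt8Aux.esum M.E w j := by ring
        _ ≤ _ := hmac
    set x : ℝ := (m i : ℝ)/((ρ i : ℝ) * n) with hxdef
    have hx0 : 0 ≤ x := by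
      rw [hxdef]
      exact div_nonneg (Nat.cast_nonneg _) (mul_nonneg (Nat.cast_nonneg _) (Nat.cast_nonneg _))
    have hθeq : (∑ e ∈ M.E, w e)/n = 1 - x := by
      rw [hsumw, hxdef]
      have hρne : (ρ i : ℝ) ≠ 0 := ne_of_gt (hρpos i hik)
      field_simp
    have hθ0 : 0 ≤ (∑ e ∈ M.E, w e)/n := by positivity
    have hθexp : (∑ e ∈ M.E, w e)/n ≤ Real.exp (-x) := by
      rw [hθeq]
      have := Real.add_one_le_exp (-x)
      linarith
    have hθpow : ((∑ e ∈ M.E, w e)/n)^j ≤ Real.exp (-((j:ℕ) * x)) := by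
      calc ((∑ e ∈ M.E, w e)/n)^j ≤ (Real.exp (-x))^j := pow_le_pow_left₀ hθ0 hθexp j
        _ = Real.exp ((j:ℕ) * (-x)) := (Real.exp_nat_mul (-x) j).symm
        _ = Real.exp (-((j:ℕ) * x)) := by ring_nf
    set u : ℝ := (j:ℕ) * x with hudef
    have hu0 : 0 ≤ u := mul_nonneg (Nat.cast_nonneg _) hx0
    have hCnn : (0:ℝ) ≤ (n.choose j : ℝ) := by positivity
    have hesum_le2 : Stmt8Aux.esum M.E w j ≤ (n.choose j : ℝ) * Real.exp (-u) :=
      hesum_le.trans (mul_le_mul_of_nonneg_left hθpow hCnn)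
    have hpt : ∀ A ∈ M.E.powersetCard j,
        (ρ i : ℝ) * (1 - c^((A ∩ S).card)) ≤ ((min ((A ∩ S).card) (ρ i) : ℕ) : ℝ) :=
      fun A _ => Stmt8Aux.min_pow_bound _ _ (hρ1 i hik)
    have hprodA : ∀ A ∈ M.E.powersetCard j, c^((A ∩ S).card) = ∏ e ∈ A, w e := by
      intro A _
      rw [hwdef]
      rw [Finset.prod_ite_mem A S (fun _ => c), Finset.prod_const]
    have hsum1 : ∑ A ∈ M.E.powersetCard j, (ρ i : ℝ) * (1 - c^((A ∩ S).card))
        ≤ ∑ A ∈ M.E.powersetCard j, ((min ((A ∩ S).card) (ρ i) : ℕ) : ℝ) :=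
      Finset.sum_le_sum hpt
    have hsum2 : ∑ A ∈ M.E.powersetCard j, (ρ i : ℝ) * (1 - c^((A ∩ S).card))
        = (ρ i : ℝ) * ((n.choose j : ℝ) - Stmt8Aux.esum M.E w j) := by
      rw [← Finset.mul_sum]
      congr 1
      rw [Finset.sum_sub_distrib, Finset.sum_const, Finset.card_powersetCard, hn,
        nsmul_eq_mul, mul_one]
      congr 1
      rw [Stmt8Aux.esum]
      exact Finset.sum_congr rfl hprodA
    have hlow : (n.choose j : ℝ) * ((ρ i : ℝ) * (1 - Real.exp (-u)))
        ≤ ∑ A ∈ M.E.powersetCard j, ((min ((A ∩ S).card) (ρ i) : ℕ) : ℝ) := by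
      refine le_trans ?_ hsum1
      rw [hsum2]
      have := hρpos i hik
      nlinarith [hesum_le2]
    have hρu : (ρ i : ℝ) * u = (j:ℝ)/n * m i := by
      rw [hudef, hxdef]
      have hρne : (ρ i : ℝ) ≠ 0 := ne_of_gt (hρpos i hik)
      field_simp
    have hmin : (ρ i : ℝ) * min u 1 = min ((j:ℝ)/n * m i) (ρ i : ℝ) := by
      have hρR := hρpos i hik
      rcases le_total u 1 with h | h
      · rw [min_eq_left h, ← hρu]
        rw [min_eq_left (by nlinarith)]
      · rw [min_eq_right h, mul_one]
        rw [min_eq_right (by nlinarith [hρu])]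
    have h5 : (1 - Real.exp (-1)) * min ((j:ℝ)/n * m i) (ρ i : ℝ)
        ≤ (ρ i : ℝ) * (1 - Real.exp (-u)) := by
      rw [← hmin]
      have h6 := Stmt8Aux.exp_min_bound u hu0
      nlinarith [hρpos i hik]
    calc (n.choose j : ℝ) * ((1 - Real.exp (-1)) * min ((j:ℝ)/n * m i) (ρ i : ℝ))
        ≤ (n.choose j : ℝ) * ((ρ i : ℝ) * (1 - Real.exp (-u))) :=
          mul_le_mul_of_nonneg_left h5 hCnn
      _ ≤ _ := hlow
  -- final assembly
  rw [show ((Real.exp 1)⁻¹ : ℝ) = Real.exp (-1) from (Real.exp_neg 1).symm]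
  rw [Finset.sum_comm (s := M.E.powersetCard j) (t := Finset.range k)]
  calc (1 - Real.exp (-1)) * ∑ A ∈ M.E.powersetCard j, (M.r A : ℝ)
      ≤ (1 - Real.exp (-1)) *
          ((n.choose j : ℝ) * ((M.r (F t) : ℝ) + (j:ℝ)/n * ((n:ℝ) - (F t).card))) :=
        mul_le_mul_of_nonneg_left ha hexp1.le
    _ = ∑ i ∈ Finset.range k,
          (n.choose j : ℝ) * ((1 - Real.exp (-1)) * min ((j:ℝ)/n * m i) (ρ i : ℝ)) := by
        rw [show ∑ i ∈ Finset.range k,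
            (n.choose j : ℝ) * ((1 - Real.exp (-1)) * min ((j:ℝ)/n * m i) (ρ i : ℝ))
            = (n.choose j : ℝ) * ((1 - Real.exp (-1)) *
                ∑ i ∈ Finset.range k, min ((j:ℝ)/n * m i) (ρ i : ℝ)) by
          rw [Finset.mul_sum, Finset.mul_sum]]
        rw [hb']
        ring
    _ ≤ ∑ i ∈ Finset.range k, ∑ A ∈ M.E.powersetCard j,
          ((min ((A ∩ (F (i+1) \ F i)).card) (ρ i) : ℕ) : ℝ) := Finset.sum_le_sum hc
    _ = ∑ i ∈ Finset.range k, ∑ A ∈ M.E.powersetCard j,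
          min ((A ∩ (F (i+1) \ F i)).card : ℝ)
            ((M.r (F (i+1)) : ℝ) - (M.r (F i) : ℝ)) := by
        refine Finset.sum_congr rfl fun i hi => Finset.sum_congr rfl fun A _ => ?_
        rw [Finset.mem_range] at hi
        rw [Nat.cast_min, hρcast i hi]
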